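/- Let C be an m×n matrix partitioned into k×k blocks C_{{i},{j}}, and let C' be the matrix whose (i,j) entry is the operator norm ‖C_{{i},{j}}‖. Then ‖C‖ ≤ ‖C'‖, i.e., the operator norm of a block matrix is at most the operator norm of the matrix of block operator norms. -/

import Mathlib

open Matrix MeasureTheory

noncomputable def opNorm {α β : Type} [Fintype α] [Fintype β] [DecidableEq β]
    (A : Matrix α β ℝ) : ℝ :=
  ‖LinearMap.toContinuousLinearMap (Matrix.toEuclideanLin A)‖

noncomputable def frobNorm {α β : Type} [Fintype α] [Fintype β] (A : Matrix α β ℝ) : ℝ :=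
  Real.sqrt (∑ i, ∑ j, A i j ^ 2)

lemma opNorm_nonneg' {α β : Type} [Fintype α] [Fintype β] [DecidableEq β]
    (A : Matrix α β ℝ) : 0 ≤ opNorm A := norm_nonneg _

lemma mulVec_norm_le' {α β : Type} [Fintype α] [Fintype β] [DecidableEq β]
    (A : Matrix α β ℝ) (v : β → ℝ) :
    ‖(WithLp.equiv 2 (α → ℝ)).symm (A *ᵥ v)‖ ≤ opNorm A * ‖(WithLp.equiv 2 (β → ℝ)).symm v‖ := by
  have h := (LinearMap.toContinuousLinearMap (Matrix.toEuclideanLin A)).le_opNorm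
    ((WithLp.equiv 2 (β → ℝ)).symm v)
  simpa [Matrix.toEuclideanLin_apply_piLp_toLp, opNorm] using h

lemma euclid_norm_sq {α : Type} [Fintype α] (v : α → ℝ) :
    ‖(WithLp.equiv 2 (α → ℝ)).symm v‖ ^ 2 = ∑ a, v a ^ 2 := by
  rw [EuclideanSpace.norm_eq, Real.sq_sqrt (by positivity)]
  simp [Real.norm_eq_abs, sq_abs]

/-- the operator norm of a block matrix is at most the operator norm of the
matrix of block operator norms. -/
theorem stmt5 {p q k : ℕ} (C : Matrix (Fin p × Fin k) (Fin q × Fin k) ℝ)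
    (C' : Matrix (Fin p) (Fin q) ℝ)
    (hC' : ∀ i j, C' i j = opNorm (Matrix.of fun a b => C (i, a) (j, b))) :
    opNorm C ≤ opNorm C' := by
  have key : ∀ x : EuclideanSpace ℝ (Fin q × Fin k),
      ‖LinearMap.toContinuousLinearMap (Matrix.toEuclideanLin C) x‖ ≤ opNorm C' * ‖x‖ := by
    intro x
    set v : (Fin q × Fin k) → ℝ := WithLp.equiv 2 _ x with hv
    have hx : x = (WithLp.equiv 2 ((Fin q × Fin k) → ℝ)).symm v := rfl
    set w : Fin q → ℝ := fun j => ‖(WithLp.equiv 2 (Fin k → ℝ)).symm (fun b => v (j, b))‖ with hw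
    have hwnn : ∀ j, 0 ≤ w j := fun j => norm_nonneg _
    set u : Fin p → ℝ := C' *ᵥ w with hu
    have hunn : ∀ i, 0 ≤ u i := fun i => by
      simp only [hu, Matrix.mulVec, dotProduct]
      refine Finset.sum_nonneg fun j _ => mul_nonneg ?_ (hwnn j)
      rw [hC']; exact opNorm_nonneg' _
    -- norm of w equals norm of x
    have hwx : ‖(WithLp.equiv 2 (Fin q → ℝ)).symm w‖ = ‖x‖ := by
      have h1 : ‖(WithLp.equiv 2 (Fin q → ℝ)).symm w‖ ^ 2 = ‖x‖ ^ 2 := by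
        rw [euclid_norm_sq, hx, euclid_norm_sq, Fintype.sum_prod_type]
        refine Finset.sum_congr rfl fun j _ => ?_
        rw [hw, euclid_norm_sq]
      nlinarith [norm_nonneg ((WithLp.equiv 2 (Fin q → ℝ)).symm w), norm_nonneg x]
    -- blockwise bound
    have hblock : ∀ i, ‖(WithLp.equiv 2 (Fin k → ℝ)).symm (fun a => (C *ᵥ v) (i, a))‖ ≤ u i := by
      intro i
      have hsplit : (fun a => (C *ᵥ v) (i, a))
          = ∑ j, ((Matrix.of fun a b => C (i, a) (j, b)) *ᵥ (fun b => v (j, b))) := by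
        funext a
        simp only [Finset.sum_apply, Matrix.mulVec, dotProduct, Matrix.of_apply,
          Fintype.sum_prod_type]
      calc ‖(WithLp.equiv 2 (Fin k → ℝ)).symm (fun a => (C *ᵥ v) (i, a))‖
          = ‖∑ j, (WithLp.equiv 2 (Fin k → ℝ)).symm
              ((Matrix.of fun a b => C (i, a) (j, b)) *ᵥ (fun b => v (j, b)))‖ := by
            rw [hsplit]
            congr 1
            exact WithLp.toLp_sum (V := Fin k → ℝ) _ _ _
        _ ≤ ∑ j, ‖(WithLp.equiv 2 (Fin k → ℝ)).symm
              ((Matrix.of fun a b => C (i, a) (j, b)) *ᵥ (fun b => v (j, b)))‖ :=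
            norm_sum_le _ _
        _ ≤ ∑ j, opNorm (Matrix.of fun a b => C (i, a) (j, b)) * w j := by
            refine Finset.sum_le_sum fun j _ => ?_
            exact mulVec_norm_le' _ _
        _ = u i := by
            simp only [hu, Matrix.mulVec, dotProduct]
            exact Finset.sum_congr rfl fun j _ => by rw [hC']
    -- combine
    have hcv : ‖(WithLp.equiv 2 ((Fin p × Fin k) → ℝ)).symm (C *ᵥ v)‖
        ≤ ‖(WithLp.equiv 2 (Fin p → ℝ)).symm u‖ := by
      have h1 : ‖(WithLp.equiv 2 ((Fin p × Fin k) → ℝ)).symm (C *ᵥ v)‖ ^ 2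
          ≤ ‖(WithLp.equiv 2 (Fin p → ℝ)).symm u‖ ^ 2 := by
        rw [euclid_norm_sq, euclid_norm_sq, Fintype.sum_prod_type]
        refine Finset.sum_le_sum fun i _ => ?_
        have h2 : (∑ a, (C *ᵥ v) (i, a) ^ 2)
            = ‖(WithLp.equiv 2 (Fin k → ℝ)).symm (fun a => (C *ᵥ v) (i, a))‖ ^ 2 := by
          rw [euclid_norm_sq]
        rw [h2]
        exact pow_le_pow_left₀ (norm_nonneg _) (hblock i) 2
      nlinarith [norm_nonneg ((WithLp.equiv 2 ((Fin p × Fin k) → ℝ)).symm (C *ᵥ v)),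
        norm_nonneg ((WithLp.equiv 2 (Fin p → ℝ)).symm u)]
    have hfinal : ‖(WithLp.equiv 2 (Fin p → ℝ)).symm u‖ ≤ opNorm C' * ‖x‖ := by
      rw [hu, ← hwx]
      exact mulVec_norm_le' C' w
    calc ‖LinearMap.toContinuousLinearMap (Matrix.toEuclideanLin C) x‖
        = ‖(WithLp.equiv 2 ((Fin p × Fin k) → ℝ)).symm (C *ᵥ v)‖ := rfl
      _ ≤ ‖(WithLp.equiv 2 (Fin p → ℝ)).symm u‖ := hcv
      _ ≤ opNorm C' * ‖x‖ := hfinal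
  exact ContinuousLinearMap.opNorm_le_bound _ (opNorm_nonneg' C') key
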